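/- A degree-0 divisor D = Σ n_i [p_i] on an elliptic curve E is principal if and only if Σ n_i · p_i = O in the group law of E. -/

import Mathlib

open WeierstrassCurve Finsupp FractionalIdeal
open scoped nonZeroDivisors

variable {F : Type*} [Field F]

/-- The invertible fractional ideal of the affine coordinate ring attached to a point of an
elliptic curve: the point at infinity `O` gives the unit ideal, and an affine point gives the
maximal ideal of functions vanishing at it.  Under the divisor/fractional-ideal correspondence
for the affine curve, a degree-zero divisor `D = Σ nᵢ [pᵢ] + n_O [O]` is the divisor of a
nonzero rational function `f` precisely when the fractional ideal `Π (ideal of pᵢ)^nᵢ` is the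
principal fractional ideal generated by `f` (the multiplicity at `O` being determined by the
degree-zero condition). -/
noncomputable def pointIdeal {W : WeierstrassCurve F} :
    W.toAffine.Point →
      (FractionalIdeal (W.toAffine.CoordinateRing)⁰ W.toAffine.FunctionField)ˣ
  | .zero => 1
  | .some _ _ h => Affine.CoordinateRing.XYIdeal' h

/-- The fractional ideal attached to the (affine part of the) divisor `D`. -/
noncomputable def divisorIdeal {W : WeierstrassCurve F} (D : W.toAffine.Point →₀ ℤ) :
    (FractionalIdeal (W.toAffine.CoordinateRing)⁰ W.toAffine.FunctionField)ˣ :=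
  D.support.prod fun p => pointIdeal p ^ D p

/-- The degree of a divisor. -/
def divDegree {W : WeierstrassCurve F} (D : W.toAffine.Point →₀ ℤ) : ℤ := D.sum fun _ n => n

open Classical in
/-- The weighted sum of the points of a divisor for the elliptic addition law. -/
noncomputable def divPointSum {W : WeierstrassCurve F} (D : W.toAffine.Point →₀ ℤ) :
    W.toAffine.Point :=
  D.sum fun p n => n • p

open Classical in
lemma toClass_pointIdeal {W : WeierstrassCurve F} (p : W.toAffine.Point) :
    Affine.Point.toClass p = Additive.ofMul (ClassGroup.mk W.toAffine.FunctionField (pointIdeal p)) := by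
  cases p with
  | zero => simp [pointIdeal, Affine.Point.toClass_zero]
  | some _ _ h => rfl

open Classical in
lemma toClass_divPointSum {W : WeierstrassCurve F} (D : W.toAffine.Point →₀ ℤ) :
    Affine.Point.toClass (divPointSum D) =
      Additive.ofMul (ClassGroup.mk W.toAffine.FunctionField (divisorIdeal D)) := by
  rw [divPointSum, divisorIdeal, map_finsuppSum, map_prod, Finsupp.sum, ofMul_prod]
  exact Finset.sum_congr rfl fun p _ => by
    rw [map_zsmul, toClass_pointIdeal, map_zpow, ofMul_zpow]

/-- a degree-zero divisor `D = Σ nᵢ [pᵢ]` on an elliptic curve is principal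
(i.e. it is the divisor of a nonzero rational function on the curve) iff `Σ nᵢ · pᵢ = O` in
the group law. -/
theorem divisor_principal_iff_pointSum_eq_zero (W : WeierstrassCurve F) [W.IsElliptic]
    (D : W.toAffine.Point →₀ ℤ) (hdeg : divDegree D = 0) :
    (∃ f : W.toAffine.FunctionField, f ≠ 0 ∧
        spanSingleton (W.toAffine.CoordinateRing)⁰ f = (divisorIdeal D :
          FractionalIdeal (W.toAffine.CoordinateRing)⁰ W.toAffine.FunctionField)) ↔
      divPointSum D = 0 := by
  classical
  rw [← Affine.Point.toClass_eq_zero, toClass_divPointSum]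
  have h1 : Additive.ofMul (ClassGroup.mk W.toAffine.FunctionField (divisorIdeal D)) = 0
      ↔ ClassGroup.mk W.toAffine.FunctionField (divisorIdeal D) = 1 := Iff.rfl
  rw [h1, ClassGroup.mk_eq_one_iff]
  constructor
  · rintro ⟨f, hf, hspan⟩
    exact ⟨⟨f, by rw [← hspan, coe_spanSingleton]⟩⟩
  · rintro ⟨⟨x, hx⟩⟩
    have hne : (divisorIdeal D :
        FractionalIdeal (W.toAffine.CoordinateRing)⁰ W.toAffine.FunctionField) ≠ 0 :=
      Units.ne_zero _
    have hxcoe : (divisorIdeal D :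
        FractionalIdeal (W.toAffine.CoordinateRing)⁰ W.toAffine.FunctionField)
        = spanSingleton (W.toAffine.CoordinateRing)⁰ x := by
      apply FractionalIdeal.coeToSubmodule_injective
      simp only [coe_spanSingleton, ← hx]
    refine ⟨x, fun h0 => hne ?_, hxcoe.symm⟩
    rw [hxcoe, h0, spanSingleton_zero]
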